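/- arXiv:1309.2375 — 3 statements merged into one kernel-verified Lean document; each statement's English description precedes it below -/
import Mathlib

section
/- Let φ : ℝ^k → ℝ be a proper convex L-Lipschitz function w.r.t. a norm ‖·‖_P with dual norm ‖·‖_D satisfying ‖·‖_2 ≤ ‖·‖_D. Define φ̃*(α) = φ*(α) + (γ/2)‖α‖_2^2 and let φ̃ be the conjugate of φ̃*. Then for every a, 0 ≤ φ(a) − φ̃(a) ≤ γL²/2. -/
open scoped BigOperators

theorem smoothing_by_conjugate_regularization_approximation
    (k : ℕ) (L γ : ℝ) (hL : 0 ≤ L) (hγ : 0 < γ)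
    (φ : (Fin k → ℝ) → ℝ) (P : (Fin k → ℝ) → ℝ)
    (hPnonneg : ∀ x, 0 ≤ P x)
    (hPeq : ∀ x, P x = 0 ↔ x = 0)
    (hPhom : ∀ (c : ℝ) (x), P (c • x) = |c| * P x)
    (hPtri : ∀ x y, P (x + y) ≤ P x + P y)
    (hconv : ConvexOn ℝ Set.univ φ)
    (hLip : ∀ a b, |φ a - φ b| ≤ L * P (a - b))
    (h2D : ∀ b : Fin k → ℝ,
      Real.sqrt (∑ i, (b i) ^ 2) ≤ sSup {r : ℝ | ∃ x, P x = 1 ∧ r = ∑ i, b i * x i})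
    (φstar : (Fin k → ℝ) → EReal)
    (hφstar : ∀ b, φstar b = ⨆ a : Fin k → ℝ, (((∑ i, a i * b i) - φ a : ℝ) : EReal))
    (φtilde : (Fin k → ℝ) → EReal)
    (hφtilde : ∀ a, φtilde a = ⨆ b : Fin k → ℝ,
      (((∑ i, a i * b i : ℝ) : EReal) - (φstar b + ((γ / 2 * ∑ i, (b i) ^ 2 : ℝ) : EReal)))) :
    ∀ a, ((φ a - γ * L ^ 2 / 2 : ℝ) : EReal) ≤ φtilde a ∧ φtilde a ≤ ((φ a : ℝ) : EReal) := by
  intro a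
  have hP0 : P 0 = 0 := (hPeq 0).mpr rfl
  -- single-vector decomposition
  have hxsum : ∀ x : Fin k → ℝ, ∑ i, x i • (Pi.single i (1:ℝ) : Fin k → ℝ) = x := by
    intro x
    ext j
    simp [Finset.sum_apply, Pi.single_apply]
  have hPsum : ∀ x : Fin k → ℝ, P x ≤ ∑ i, |x i| * P (Pi.single i 1) := by
    intro x
    calc P x = P (∑ i, x i • (Pi.single i (1:ℝ) : Fin k → ℝ)) := by rw [hxsum]
      _ ≤ ∑ i, P (x i • (Pi.single i (1:ℝ) : Fin k → ℝ)) :=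
          Finset.le_sum_of_subadditive P hP0.le hPtri _ _
      _ = ∑ i, |x i| * P (Pi.single i 1) := by simp [hPhom]
  -- continuity of φ
  have hφcont : Continuous φ := by
    rw [continuous_iff_continuousAt]
    intro x₀
    have habs : Filter.Tendsto (fun x => |φ x - φ x₀|) (nhds x₀) (nhds 0) := by
      have hgcont : Filter.Tendsto
          (fun x : Fin k → ℝ => L * ∑ i, |x i - x₀ i| * P (Pi.single i 1))
          (nhds x₀) (nhds (L * ∑ i, |x₀ i - x₀ i| * P (Pi.single i 1))) := by
        apply Filter.Tendsto.const_mul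
        apply tendsto_finset_sum
        intro i _
        exact (((continuous_apply i).sub continuous_const).abs.mul continuous_const).tendsto x₀
      simp only [sub_self, abs_zero, zero_mul, Finset.sum_const_zero, mul_zero] at hgcont
      apply squeeze_zero (fun t => abs_nonneg _) _ hgcont
      intro t
      calc |φ t - φ x₀| ≤ L * P (t - x₀) := hLip t x₀
        _ ≤ L * ∑ i, |t i - x₀ i| * P (Pi.single i 1) := by
            apply mul_le_mul_of_nonneg_left _ hL
            simpa using hPsum (t - x₀)
    have h2 : Filter.Tendsto (fun x => φ x - φ x₀) (nhds x₀) (nhds 0) :=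
      (tendsto_zero_iff_abs_tendsto_zero _).mpr habs
    have h3 := h2.add (tendsto_const_nhds (x := φ x₀))
    simpa [ContinuousAt] using h3
  -- strict epigraph, separation
  have hSconv : Convex ℝ {p : (Fin k → ℝ) × ℝ | φ p.1 < p.2} := by
    have := hconv.convex_strict_epigraph
    simpa using this
  have hSopen : IsOpen {p : (Fin k → ℝ) × ℝ | φ p.1 < p.2} :=
    isOpen_lt (hφcont.comp continuous_fst) continuous_snd
  have hnot : ((a, φ a) : (Fin k → ℝ) × ℝ) ∉ {p : (Fin k → ℝ) × ℝ | φ p.1 < p.2} := by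
    simp
  obtain ⟨f, hf⟩ := geometric_hahn_banach_open_point hSconv hSopen hnot
  set c : ℝ := f (0, 1) with hcdef
  have hsplit : ∀ (x : Fin k → ℝ) (t : ℝ), f (x, t) = f (x, 0) + t * c := by
    intro x t
    have hxt : ((x, t) : (Fin k → ℝ) × ℝ) = (x, (0:ℝ)) + t • ((0 : Fin k → ℝ), (1:ℝ)) := by
      simp [Prod.ext_iff]
    rw [hxt, map_add, map_smul, smul_eq_mul]
  have hc : c < 0 := by
    have h1 := hf (a, φ a + 1) (by simp)
    rw [hsplit a (φ a + 1), hsplit a (φ a)] at h1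
    linarith
  have hcne : c ≠ 0 := ne_of_lt hc
  have key : ∀ (x : Fin k → ℝ) (ε : ℝ), 0 < ε →
      f (x, 0) + (φ x + ε) * c < f (a, 0) + φ a * c := by
    intro x ε hε
    have h1 := hf (x, φ x + ε) (by simp; linarith)
    rw [hsplit x (φ x + ε), hsplit a (φ a)] at h1
    simpa using h1
  have hsub : ∀ x : Fin k → ℝ, f (x, 0) + φ x * c ≤ f (a, 0) + φ a * c := by
    intro x
    by_contra hlt
    push_neg at hlt
    set D : ℝ := f (x, 0) + φ x * c - (f (a, 0) + φ a * c) with hD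
    have hDpos : 0 < D := by simp only [hD]; linarith
    have hεpos : 0 < D / (-2 * c) := div_pos hDpos (by linarith)
    have h1 := key x _ hεpos
    have h2 : D / (-2 * c) * c = -(D / 2) := by field_simp
    rw [add_mul, h2] at h1
    simp only [hD] at h1 hDpos
    linarith
  -- define subgradient b
  set b : Fin k → ℝ := fun i => f (Pi.single i 1, 0) / (-c) with hbdef
  have hlin : ∀ x : Fin k → ℝ, f (x, (0:ℝ)) = ∑ i, x i * f (Pi.single i 1, 0) := by
    intro x
    have hx : ((x, (0:ℝ)) : (Fin k → ℝ) × ℝ)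
        = ∑ i, x i • (((Pi.single i 1 : Fin k → ℝ), (0:ℝ)) : (Fin k → ℝ) × ℝ) := by
      apply Prod.ext
      · rw [Prod.fst_sum]
        simpa using (hxsum x).symm
      · rw [Prod.snd_sum]
        simp
    rw [hx, map_sum]
    simp only [map_smul, smul_eq_mul]
  have hbx : ∀ x : Fin k → ℝ, ∑ i, x i * b i = f (x, 0) / (-c) := by
    intro x
    rw [hlin, Finset.sum_div]
    apply Finset.sum_congr rfl
    intro i _
    rw [hbdef, mul_div_assoc]
  have hcneg : 0 < -c := by linarith
  have hsubb : ∀ x : Fin k → ℝ, (∑ i, x i * b i) - φ x ≤ (∑ i, a i * b i) - φ a := by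
    intro x
    rw [hbx, hbx]
    have h3 : (f (x, 0) + φ x * c) / (-c) ≤ (f (a, 0) + φ a * c) / (-c) :=
      div_le_div_of_nonneg_right (hsub x) hcneg.le
    have h4 : ∀ y r : ℝ, (y + r * c) / (-c) = y / (-c) - r := by
      intro y r; field_simp; ring
    rw [h4, h4] at h3
    exact h3
  -- value of φstar at b
  have hstarb : φstar b = (((∑ i, a i * b i) - φ a : ℝ) : EReal) := by
    rw [hφstar]
    apply le_antisymm
    · exact iSup_le fun x => EReal.coe_le_coe_iff.mpr (hsubb x)
    · exact le_iSup (fun x : Fin k → ℝ => (((∑ i, x i * b i) - φ x : ℝ) : EReal)) a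
  -- norm bound on b
  have hbL : ∀ x : Fin k → ℝ, P x = 1 → ∑ i, b i * x i ≤ L := by
    intro x hx1
    have h1 := hsubb (a + x)
    have h2 : ∑ i, (a + x) i * b i = ∑ i, a i * b i + ∑ i, x i * b i := by
      rw [← Finset.sum_add_distrib]
      apply Finset.sum_congr rfl
      intro i _
      simp [add_mul]
    have h3 : φ (a + x) - φ a ≤ L * P x := by
      have h5 := hLip (a + x) a
      have h6 : a + x - a = x := by abel
      rw [h6] at h5
      exact (le_abs_self _).trans h5
    have h7 : ∑ i, b i * x i = ∑ i, x i * b i := by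
      apply Finset.sum_congr rfl; intro i _; ring
    rw [h7]
    rw [hx1, mul_one] at h3
    rw [h2] at h1
    linarith
  have hDle : sSup {r : ℝ | ∃ x, P x = 1 ∧ r = ∑ i, b i * x i} ≤ L := by
    apply Real.sSup_le _ hL
    rintro r ⟨x, hx, rfl⟩
    exact hbL x hx
  have hbsq : ∑ i, b i ^ 2 ≤ L ^ 2 := by
    have h0 : 0 ≤ ∑ i, b i ^ 2 := Finset.sum_nonneg fun i _ => sq_nonneg _
    have h1 : Real.sqrt (∑ i, b i ^ 2) ≤ L := (h2D b).trans hDle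
    nlinarith [Real.sq_sqrt h0, Real.sqrt_nonneg (∑ i, b i ^ 2)]
  constructor
  · -- lower bound
    rw [hφtilde]
    refine le_trans ?_ (le_iSup (fun v : Fin k → ℝ =>
      (((∑ i, a i * v i : ℝ) : EReal) - (φstar v + ((γ / 2 * ∑ i, (v i) ^ 2 : ℝ) : EReal)))) b)
    rw [hstarb, ← EReal.coe_add, ← EReal.coe_sub]
    apply EReal.coe_le_coe_iff.mpr
    have h8 : γ / 2 * ∑ i, b i ^ 2 ≤ γ * L ^ 2 / 2 := by nlinarith
    linarith
  · -- upper bound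
    rw [hφtilde]
    apply iSup_le
    intro v
    have h5 : (((∑ i, a i * v i) - φ a : ℝ) : EReal) ≤ φstar v := by
      rw [hφstar]
      exact le_iSup (fun x : Fin k → ℝ => (((∑ i, x i * v i) - φ x : ℝ) : EReal)) a
    have hnn : (0 : ℝ) ≤ γ / 2 * ∑ i, (v i) ^ 2 := by
      have h0 : (0:ℝ) ≤ ∑ i, (v i) ^ 2 := Finset.sum_nonneg fun i _ => sq_nonneg _
      positivity
    have h6 : (((∑ i, a i * v i) - φ a : ℝ) : EReal)
        ≤ φstar v + ((γ / 2 * ∑ i, (v i) ^ 2 : ℝ) : EReal) := by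
      calc (((∑ i, a i * v i) - φ a : ℝ) : EReal)
          = (((∑ i, a i * v i) - φ a : ℝ) : EReal) + (0 : EReal) := by rw [add_zero]
        _ ≤ φstar v + ((γ / 2 * ∑ i, (v i) ^ 2 : ℝ) : EReal) := by
            apply add_le_add h5
            exact_mod_cast hnn
    calc ((∑ i, a i * v i : ℝ) : EReal) - (φstar v + ((γ / 2 * ∑ i, (v i) ^ 2 : ℝ) : EReal))
        ≤ ((∑ i, a i * v i : ℝ) : EReal) - (((∑ i, a i * v i) - φ a : ℝ) : EReal) :=
          EReal.sub_le_sub le_rfl h6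
      _ = ((φ a : ℝ) : EReal) := by
          rw [← EReal.coe_sub]
          norm_num
end

section
/- The conjugate of the soft-max-of-hinge loss φ_γ(a) = γ·log(1 + Σ_i e^{(c_i+a_i)/γ}) is φ_γ*(b) = −⟨c, b⟩ + γ·[(1−‖b‖₁)·log(1−‖b‖₁) + Σ_j b_j·log(b_j)] for b in the simplex-cap S = {b ∈ ℝ₊^k : ‖b‖₁ ≤ 1} (with 0·log 0 = 0), and φ_γ*(b) = +∞ for b ∉ S. -/
open scoped BigOperators
open Filter Topology

theorem gibbs_aux (k : ℕ) (b x : Fin k → ℝ) (hb : ∀ i, 0 ≤ b i) (hs : ∑ i, b i ≤ 1) :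
    ∑ i, b i * x i - Real.log (1 + ∑ i, Real.exp (x i)) ≤
    (1 - ∑ i, b i) * Real.log (1 - ∑ i, b i) + ∑ i, b i * Real.log (b i) := by
  set s := ∑ i, b i with hsdef
  set Q := 1 + ∑ i, Real.exp (x i) with hQdef
  have hsum_exp : 0 ≤ ∑ i, Real.exp (x i) :=
    Finset.sum_nonneg fun i _ => (Real.exp_pos _).le
  have hQ : 0 < Q := by positivity
  have key : ∀ i, b i * x i ≤ b i * Real.log (b i) + b i * Real.log Q +
      (Real.exp (x i) / Q - b i) := by
    intro i
    rcases eq_or_lt_of_le (hb i) with h0 | h0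
    · rw [← h0]; simp; positivity
    · have h1 : Real.log (Real.exp (x i) / (b i * Q)) ≤ Real.exp (x i) / (b i * Q) - 1 :=
        Real.log_le_sub_one_of_pos (by positivity)
      have h2 : Real.log (Real.exp (x i) / (b i * Q)) = x i - Real.log (b i) - Real.log Q := by
        rw [Real.log_div (Real.exp_ne_zero _) (by positivity), Real.log_exp,
          Real.log_mul (ne_of_gt h0) (ne_of_gt hQ)]; ring
      have h3 := mul_le_mul_of_nonneg_left h1 h0.le
      rw [h2] at h3
      have h4 : b i * (Real.exp (x i) / (b i * Q) - 1) = Real.exp (x i) / Q - b i := by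
        field_simp
      rw [h4] at h3; nlinarith
  have hsum := Finset.sum_le_sum (fun i (_ : i ∈ Finset.univ) => key i)
  rw [Finset.sum_add_distrib, Finset.sum_add_distrib] at hsum
  have hA : ∑ i, b i * Real.log Q = s * Real.log Q := by
    rw [hsdef, ← Finset.sum_mul]
  have hB : ∑ i, (Real.exp (x i) / Q - b i) = (Q - 1) / Q - s := by
    rw [Finset.sum_sub_distrib, ← Finset.sum_div, hsdef, hQdef]; ring_nf
  rw [hA, hB] at hsum
  have slack : 0 ≤ (1 - s) * Real.log (1 - s) + (1 - s) * Real.log Q + (1 / Q - (1 - s)) := by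
    rcases eq_or_lt_of_le hs with h1 | h1
    · rw [← h1]; simp; positivity
    · have hpos : 0 < 1 - s := by linarith
      have h2 : Real.log (1 / ((1 - s) * Q)) ≤ 1 / ((1 - s) * Q) - 1 :=
        Real.log_le_sub_one_of_pos (by positivity)
      have h3 : Real.log (1 / ((1 - s) * Q)) = -Real.log (1 - s) - Real.log Q := by
        rw [Real.log_div one_ne_zero (by positivity),
          Real.log_mul (ne_of_gt hpos) (ne_of_gt hQ)]; simp; ring
      have h4 := mul_le_mul_of_nonneg_left h2 hpos.le
      rw [h3] at h4
      have h5 : (1 - s) * (1 / ((1 - s) * Q) - 1) = 1 / Q - (1 - s) := by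
        field_simp
      rw [h5] at h4; nlinarith
  have hQ1 : (Q - 1) / Q + 1 / Q = 1 := by field_simp; ring
  linarith

theorem conjugate_soft_max_of_hinge (k : ℕ) (γ : ℝ) (hγ : 0 < γ)
    (c : Fin k → ℝ) (b : Fin k → ℝ) :
    (⨆ a : Fin k → ℝ,
        (((∑ i, a i * b i) - γ * Real.log (1 + ∑ i, Real.exp ((c i + a i) / γ)) : ℝ) : EReal)) =
      if (∀ j, 0 ≤ b j) ∧ (∑ j, b j) ≤ 1 then
        ((-(∑ j, c j * b j) +
            γ * ((1 - ∑ j, b j) * Real.log (1 - ∑ j, b j) +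
              ∑ j, b j * Real.log (b j)) : ℝ) : EReal)
      else ⊤ := by
  set F : (Fin k → ℝ) → ℝ := fun a =>
    (∑ i, a i * b i) - γ * Real.log (1 + ∑ i, Real.exp ((c i + a i) / γ)) with hF
  by_cases hS : (∀ j, 0 ≤ b j) ∧ (∑ j, b j) ≤ 1
  · rw [if_pos hS]
    obtain ⟨hb, hs⟩ := hS
    set s := ∑ j, b j with hsdef
    set f : ℝ := -(∑ j, c j * b j) +
        γ * ((1 - s) * Real.log (1 - s) + ∑ j, b j * Real.log (b j)) with hf
    apply le_antisymm
    · apply iSup_le; intro a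
      rw [EReal.coe_le_coe_iff]
      have hg := gibbs_aux k b (fun i => (c i + a i) / γ) hb hs
      have e1 : ∑ i, b i * ((c i + a i) / γ)
          = ((∑ i, c i * b i) + ∑ i, a i * b i) / γ := by
        rw [← Finset.sum_add_distrib, Finset.sum_div]
        exact Finset.sum_congr rfl fun i _ => by field_simp
      rw [e1] at hg
      have h2 := mul_le_mul_of_nonneg_left hg hγ.le
      have h3 : γ * (((∑ i, c i * b i) + ∑ i, a i * b i) / γ
            - Real.log (1 + ∑ i, Real.exp ((c i + a i) / γ)))
          = (∑ i, c i * b i) + (∑ i, a i * b i)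
            - γ * Real.log (1 + ∑ i, Real.exp ((c i + a i) / γ)) := by
        field_simp
      rw [h3] at h2
      simp only [hF, hf]
      linarith
    · -- lower bound via tendsto
      set ε : ℕ → ℝ := fun n => 1 / ((n : ℝ) + 1) with hε
      have hεpos : ∀ n, 0 < ε n := fun n => by positivity
      have hεlim : Tendsto ε atTop (𝓝 0) := tendsto_one_div_add_atTop_nhds_zero_nat
      have h1s : 0 ≤ 1 - s := by linarith
      set aseq : ℕ → (Fin k → ℝ) := fun n i =>
        γ * Real.log ((b i + ε n) / (1 - s + ε n)) - c i with haseq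
      have hval : ∀ n, F (aseq n) =
          γ * ((∑ i, b i * Real.log (b i + ε n)) + (1 - s) * Real.log (1 - s + ε n)
            - Real.log (1 + ((k : ℝ) + 1) * ε n)) - ∑ i, c i * b i := by
        intro n
        have hεn := hεpos n
        have hbi : ∀ i, 0 < b i + ε n := fun i => by have := hb i; linarith
        have h1sn : 0 < 1 - s + ε n := by linarith
        have hexp : ∀ i, Real.exp ((c i + aseq n i) / γ) = (b i + ε n) / (1 - s + ε n) := by
          intro i
          have : (c i + aseq n i) / γ = Real.log ((b i + ε n) / (1 - s + ε n)) := by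
            simp only [haseq]; field_simp; ring
          rw [this, Real.exp_log (div_pos (hbi i) h1sn)]
        have hsumexp : 1 + ∑ i, Real.exp ((c i + aseq n i) / γ)
            = (1 + ((k : ℝ) + 1) * ε n) / (1 - s + ε n) := by
          simp_rw [hexp]
          rw [← Finset.sum_div, Finset.sum_add_distrib, Finset.sum_const,
            Finset.card_univ, Fintype.card_fin, ← hsdef]
          field_simp; ring
        have hlog : Real.log ((1 + ((k : ℝ) + 1) * ε n) / (1 - s + ε n))
            = Real.log (1 + ((k : ℝ) + 1) * ε n) - Real.log (1 - s + ε n) :=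
          Real.log_div (by positivity) (ne_of_gt h1sn)
        have hlin : ∑ i, aseq n i * b i =
            γ * ((∑ i, b i * Real.log (b i + ε n)) - s * Real.log (1 - s + ε n))
              - ∑ i, c i * b i := by
          have e : ∀ i, aseq n i * b i =
              γ * (b i * Real.log (b i + ε n) - b i * Real.log (1 - s + ε n)) - c i * b i := by
            intro i
            simp only [haseq]
            rw [Real.log_div (ne_of_gt (hbi i)) (ne_of_gt h1sn)]
            ring
          rw [Finset.sum_congr rfl fun i _ => e i, Finset.sum_sub_distrib, ← Finset.mul_sum,
            Finset.sum_sub_distrib, ← Finset.sum_mul, ← hsdef]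
        simp only [hF]
        rw [hsumexp, hlog, hlin]
        ring
      have hvlim : Tendsto (fun n => F (aseq n)) atTop (𝓝 f) := by
        have hA : Tendsto (fun n => ∑ i, b i * Real.log (b i + ε n)) atTop
            (𝓝 (∑ i, b i * Real.log (b i))) := by
          apply tendsto_finset_sum
          intro i _
          rcases eq_or_lt_of_le (hb i) with h0 | h0
          · simp only [← h0, zero_mul]; exact tendsto_const_nhds
          · have h1 : Tendsto (fun n => b i + ε n) atTop (𝓝 (b i)) := by
              simpa using tendsto_const_nhds.add hεlim
            exact ((Real.continuousAt_log (ne_of_gt h0)).tendsto.comp h1).const_mul _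
        have hB : Tendsto (fun n => (1 - s) * Real.log (1 - s + ε n)) atTop
            (𝓝 ((1 - s) * Real.log (1 - s))) := by
          rcases eq_or_lt_of_le hs with h0 | h0
          · simp only [← h0, sub_self, zero_mul]; exact tendsto_const_nhds
          · have h1 : Tendsto (fun n => 1 - s + ε n) atTop (𝓝 (1 - s)) := by
              simpa using tendsto_const_nhds.add hεlim
            exact ((Real.continuousAt_log (by linarith)).tendsto.comp h1).const_mul _
        have hC : Tendsto (fun n => Real.log (1 + ((k : ℝ) + 1) * ε n)) atTop (𝓝 0) := by
          have h1 : Tendsto (fun n => 1 + ((k : ℝ) + 1) * ε n) atTop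
              (𝓝 (1 + ((k : ℝ) + 1) * 0)) := tendsto_const_nhds.add (hεlim.const_mul _)
          rw [mul_zero, add_zero] at h1
          have h2 := (Real.continuousAt_log one_ne_zero).tendsto.comp h1
          rw [Real.log_one] at h2
          exact h2
        have hT := (((hA.add hB).sub hC).const_mul γ).sub_const (∑ i, c i * b i)
        simp only [hval]
        convert hT using 2
        rw [hf]; ring
      have hle : ∀ n, ((F (aseq n) : ℝ) : EReal) ≤
          ⨆ a : Fin k → ℝ, ((F a : ℝ) : EReal) := fun n => le_iSup (fun a => ((F a : ℝ) : EReal)) (aseq n)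
      exact le_of_tendsto (EReal.tendsto_coe.2 hvlim) (Filter.Eventually.of_forall hle)
  · rw [if_neg hS]
    rw [eq_top_iff]
    suffices h : ∃ aseq : ℕ → (Fin k → ℝ), Tendsto (fun n => F (aseq n)) atTop atTop by
      obtain ⟨aseq, htop⟩ := h
      have hle : ∀ n, ((F (aseq n) : ℝ) : EReal) ≤ ⨆ a : Fin k → ℝ, ((F a : ℝ) : EReal) :=
        fun n => le_iSup (fun a => ((F a : ℝ) : EReal)) (aseq n)
      have htop' : Tendsto (fun n => ((F (aseq n) : ℝ) : EReal)) atTop (𝓝 ⊤) := by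
        rw [EReal.tendsto_nhds_top_iff_real]
        intro x
        filter_upwards [htop.eventually_gt_atTop x] with n hn
        exact_mod_cast hn
      exact le_of_tendsto htop' (Filter.Eventually.of_forall hle)
    set C₀ : ℝ := Real.log (1 + ∑ i, Real.exp (c i / γ)) with hC₀
    have hpos0 : (0:ℝ) < 1 + ∑ i, Real.exp (c i / γ) := by positivity
    by_cases hpos : ∀ j, 0 ≤ b j
    · have hgt : 1 < ∑ j, b j := lt_of_not_ge fun h => hS ⟨hpos, h⟩
      refine ⟨fun n _ => (n : ℝ), ?_⟩
      have bound : ∀ n : ℕ, (n : ℝ) * ((∑ j, b j) - 1) - γ * C₀ ≤ F (fun _ => (n : ℝ)) := by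
        intro n
        have hlog : Real.log (1 + ∑ i, Real.exp ((c i + (n : ℝ)) / γ))
            ≤ (n : ℝ) / γ + C₀ := by
          have e1 : ∀ i : Fin k, Real.exp ((c i + (n : ℝ)) / γ)
              = Real.exp (c i / γ) * Real.exp ((n : ℝ) / γ) := by
            intro i
            rw [← Real.exp_add]
            congr 1
            ring
          have h1 : (1:ℝ) ≤ Real.exp ((n : ℝ) / γ) :=
            Real.one_le_exp (by positivity)
          have h2 : 1 + ∑ i, Real.exp ((c i + (n : ℝ)) / γ)
              ≤ Real.exp ((n : ℝ) / γ) * (1 + ∑ i, Real.exp (c i / γ)) := by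
            simp_rw [e1]
            rw [← Finset.sum_mul]
            have h3 : (0:ℝ) ≤ ∑ i, Real.exp (c i / γ) :=
              Finset.sum_nonneg fun i _ => (Real.exp_pos _).le
            nlinarith
          calc Real.log (1 + ∑ i, Real.exp ((c i + (n : ℝ)) / γ))
              ≤ Real.log (Real.exp ((n : ℝ) / γ) * (1 + ∑ i, Real.exp (c i / γ))) :=
                Real.log_le_log (by positivity) h2
            _ = (n : ℝ) / γ + C₀ := by
                rw [Real.log_mul (Real.exp_ne_zero _) (ne_of_gt hpos0), Real.log_exp]
        have hsum : ∑ i, (n : ℝ) * b i = (n : ℝ) * ∑ j, b j := by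
          rw [Finset.mul_sum]
        have h4 := mul_le_mul_of_nonneg_left hlog hγ.le
        have h5 : γ * ((n : ℝ) / γ + C₀) = (n : ℝ) + γ * C₀ := by field_simp
        simp only [hF, hsum]
        linarith
      refine tendsto_atTop_mono bound ?_
      apply tendsto_atTop_add_const_right
      exact Tendsto.atTop_mul_const (by linarith) tendsto_natCast_atTop_atTop
    · push_neg at hpos
      obtain ⟨j, hj⟩ := hpos
      refine ⟨fun n i => if i = j then -(n : ℝ) else 0, ?_⟩
      have bound : ∀ n : ℕ, (n : ℝ) * (-(b j)) - γ * C₀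
          ≤ F (fun i => if i = j then -(n : ℝ) else 0) := by
        intro n
        have hsum : ∑ i, (if i = j then -(n : ℝ) else 0) * b i = -(n : ℝ) * b j := by
          rw [Finset.sum_eq_single j]
          · simp
          · intro i _ hij; simp [hij]
          · intro h; exact absurd (Finset.mem_univ j) h
        have hlog : Real.log (1 + ∑ i, Real.exp ((c i + (if i = j then -(n : ℝ) else 0)) / γ))
            ≤ C₀ := by
          apply Real.log_le_log (by positivity)
          apply add_le_add le_rfl
          apply Finset.sum_le_sum
          intro i _
          apply Real.exp_le_exp.2
          gcongr
          split <;> simp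
        have h4 := mul_le_mul_of_nonneg_left hlog hγ.le
        have h6 : (n : ℝ) * (-(b j)) = -(n : ℝ) * b j := by ring
        simp only [hF, hsum]
        linarith
      refine tendsto_atTop_mono bound ?_
      apply tendsto_atTop_add_const_right
      exact Tendsto.atTop_mul_const (by linarith) tendsto_natCast_atTop_atTop
end

section
/- For any γ > 0, the function φ̃_γ : ℝ^k → ℝ defined by φ̃_γ(a) = (γ/2)‖(a+c)/γ‖² − (γ/2)·min_{b ∈ S} ‖b − (a+c)/γ‖², where S = {b ∈ ℝ₊^k : ‖b‖₁ ≤ 1}, satisfies φ(a) − γ/2 ≤ φ̃_γ(a) ≤ φ(a), where φ(a) = max_j [c_j + a_j]_+ is the max-of-hinge loss. -/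
open scoped BigOperators

theorem smoothed_max_of_hinge_approximation
    (k : ℕ) (hk : 0 < k) (γ : ℝ) (hγ : 0 < γ) (c : Fin k → ℝ)
    (φt : (Fin k → ℝ) → ℝ)
    (hφt : ∀ a, φt a = γ / 2 * (∑ i, ((a i + c i) / γ) ^ 2) -
      γ / 2 * sInf {r : ℝ | ∃ b : Fin k → ℝ, (∀ j, 0 ≤ b j) ∧ (∑ j, b j) ≤ 1 ∧
        r = ∑ i, (b i - (a i + c i) / γ) ^ 2}) :
    ∀ a, (⨆ j, max 0 (c j + a j)) - γ / 2 ≤ φt a ∧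
      φt a ≤ ⨆ j, max 0 (c j + a j) := by
  haveI : Nonempty (Fin k) := ⟨⟨0, hk⟩⟩
  intro a
  set d : Fin k → ℝ := fun i => (a i + c i) / γ with hd
  set E : Set ℝ := {r : ℝ | ∃ b : Fin k → ℝ, (∀ j, 0 ≤ b j) ∧ (∑ j, b j) ≤ 1 ∧
      r = ∑ i, (b i - (a i + c i) / γ) ^ 2} with hE
  set φ : ℝ := ⨆ j, max 0 (c j + a j) with hφ
  have hbdda : BddAbove (Set.range fun j => max 0 (c j + a j)) :=
    Set.Finite.bddAbove (Set.finite_range _)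
  have hφj : ∀ j, max 0 (c j + a j) ≤ φ := fun j => le_ciSup hbdda j
  have hφ0 : 0 ≤ φ := le_trans (le_max_left _ _) (hφj ⟨0, hk⟩)
  -- E nonempty and bounded below
  have hne : E.Nonempty := by
    refine ⟨∑ i, ((0 : ℝ) - (a i + c i) / γ) ^ 2, fun _ => 0, fun j => le_refl 0, ?_, rfl⟩
    simp
  have hbdd : BddBelow E := by
    refine ⟨0, fun r hr => ?_⟩
    obtain ⟨b, _, _, hrr⟩ := hr
    rw [hrr]
    exact Finset.sum_nonneg fun i _ => sq_nonneg _
  -- inner product bound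
  have hip : ∀ b : Fin k → ℝ, (∀ j, 0 ≤ b j) → (∑ j, b j) ≤ 1 →
      ∑ i, b i * (a i + c i) ≤ φ := by
    intro b hb hs
    calc ∑ i, b i * (a i + c i) ≤ ∑ i, b i * φ := by
          refine Finset.sum_le_sum fun i _ => mul_le_mul_of_nonneg_left ?_ (hb i)
          exact le_trans (by rw [add_comm]; exact le_max_right _ _) (hφj i)
      _ = (∑ i, b i) * φ := by rw [Finset.sum_mul]
      _ ≤ 1 * φ := mul_le_mul_of_nonneg_right hs hφ0
      _ = φ := one_mul φ
  -- expansion of squares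
  have hexp : ∀ b : Fin k → ℝ, ∑ i, (b i - (a i + c i) / γ) ^ 2 =
      ∑ i, (b i) ^ 2 - 2 * ∑ i, b i * ((a i + c i) / γ) + ∑ i, ((a i + c i) / γ) ^ 2 := by
    intro b
    have h := Finset.sum_congr rfl fun i (_ : i ∈ Finset.univ) =>
      (by ring : (b i - (a i + c i) / γ) ^ 2 =
        (b i) ^ 2 - 2 * (b i * ((a i + c i) / γ)) + ((a i + c i) / γ) ^ 2)
    rw [h, Finset.sum_add_distrib, Finset.sum_sub_distrib, ← Finset.mul_sum]
  have hbd_sum : ∀ b : Fin k → ℝ, (∀ j, 0 ≤ b j) → (∑ j, b j) ≤ 1 →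
      ∑ i, b i * ((a i + c i) / γ) ≤ φ / γ := by
    intro b hb hs
    have : ∑ i, b i * ((a i + c i) / γ) = (∑ i, b i * (a i + c i)) / γ := by
      rw [Finset.sum_div]
      exact Finset.sum_congr rfl fun i _ => (mul_div_assoc _ _ _).symm
    rw [this]
    exact div_le_div_of_nonneg_right (hip b hb hs) hγ.le
  -- lower bound on sInf E
  have hlow : (∑ i, ((a i + c i) / γ) ^ 2) - 2 / γ * φ ≤ sInf E := by
    refine le_csInf hne fun r hr => ?_
    obtain ⟨b, hb, hs, hrr⟩ := hr
    have h1 := hbd_sum b hb hs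
    have h2 : (0:ℝ) ≤ ∑ i, (b i) ^ 2 := Finset.sum_nonneg fun i _ => sq_nonneg _
    rw [hrr, hexp b]
    have : 2 / γ * φ = 2 * (φ / γ) := by ring
    rw [this]
    linarith
  constructor
  · -- lower bound: φ - γ/2 ≤ φt a
    obtain ⟨j, hj⟩ := Finite.exists_max (fun j => max 0 (c j + a j))
    have hφeq : φ = max 0 (c j + a j) := le_antisymm (ciSup_le hj) (hφj j)
    by_cases hpos : 0 < c j + a j
    · have hφv : φ = c j + a j := by rw [hφeq, max_eq_right hpos.le]
      set b : Fin k → ℝ := fun i => if i = j then 1 else 0 with hbdef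
      have hmem : (∑ i, (b i - (a i + c i) / γ) ^ 2) ∈ E := by
        refine ⟨b, fun i => by by_cases h : i = j <;> simp [hbdef, h], ?_, rfl⟩
        simp [hbdef]
      have hval : ∑ i, (b i - (a i + c i) / γ) ^ 2 =
          1 - 2 * ((a j + c j) / γ) + ∑ i, ((a i + c i) / γ) ^ 2 := by
        rw [hexp b]
        have hb2 : ∑ i, (b i) ^ 2 = 1 := by simp [hbdef, sq]
        have hbd : ∑ i, b i * ((a i + c i) / γ) = (a j + c j) / γ := by
          simp [hbdef, ite_mul]
        rw [hb2, hbd]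
      have hsle : sInf E ≤ 1 - 2 * ((a j + c j) / γ) + ∑ i, ((a i + c i) / γ) ^ 2 :=
        hval ▸ csInf_le hbdd hmem
      rw [hφt a]
      have key := mul_le_mul_of_nonneg_left hsle (by positivity : (0:ℝ) ≤ γ / 2)
      have hcancel : γ / 2 * (1 - 2 * ((a j + c j) / γ) + ∑ i, ((a i + c i) / γ) ^ 2)
          = γ / 2 - (a j + c j) + γ / 2 * ∑ i, ((a i + c i) / γ) ^ 2 := by
        field_simp
      rw [hcancel] at key
      have : φ = a j + c j := by rw [hφv]; ring
      linarith
    · have hφz : φ = 0 := by rw [hφeq, max_eq_left (not_lt.mp hpos)]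
      have hmem : (∑ i, ((0:ℝ) - (a i + c i) / γ) ^ 2) ∈ E :=
        ⟨fun _ => 0, fun _ => le_refl 0, by simp, rfl⟩
      have hval : ∑ i, ((0:ℝ) - (a i + c i) / γ) ^ 2 = ∑ i, ((a i + c i) / γ) ^ 2 := by
        exact Finset.sum_congr rfl fun i _ => by ring
      have hsle : sInf E ≤ ∑ i, ((a i + c i) / γ) ^ 2 := hval ▸ csInf_le hbdd hmem
      rw [hφt a, hφz]
      have key := mul_le_mul_of_nonneg_left hsle (by positivity : (0:ℝ) ≤ γ / 2)
      linarith
  · -- upper bound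
    rw [hφt a]
    have key := mul_le_mul_of_nonneg_left hlow (by positivity : (0:ℝ) ≤ γ / 2)
    have hcancel : γ / 2 * ((∑ i, ((a i + c i) / γ) ^ 2) - 2 / γ * φ)
        = γ / 2 * (∑ i, ((a i + c i) / γ) ^ 2) - φ := by
      field_simp
    rw [hcancel] at key
    linarith
end
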